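/- For the step-function pair correlation g₂(r) = Θ(r−1), the structure factor S(k) = 1 − φ 2^{3ν} Γ(1+ν) J_ν(k)/k^ν (ν = d/2) is nonnegative for all k > 0 whenever φ ≤ 1/2^d, since 2^ν Γ(1+ν) J_ν(k)/k^ν ≤ 1 for all k > 0. -/

import Mathlib

open Real MeasureTheory Set intervalIntegral


private lemma bdd_integrableOn {f : ℝ → ℝ} {s : Set ℝ} (hs : MeasurableSet s)
    (hμ : volume s < ⊤) (hm : Measurable f) {C : ℝ} (hC : ∀ x ∈ s, |f x| ≤ C) :
    IntegrableOn f s volume := by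
  refine Integrable.mono' (integrableOn_const (C := C) hμ.ne) hm.aestronglyMeasurable.restrict ?_
  · rw [ae_restrict_iff' hs]
    exact Filter.Eventually.of_forall fun x hx => by simpa [Real.norm_eq_abs] using hC x hx

private lemma bdd_intervalIntegrable {f : ℝ → ℝ} {a b : ℝ} (hab : a ≤ b) (hm : Measurable f)
    {C : ℝ} (hC : ∀ x ∈ Set.Icc a b, |f x| ≤ C) :
    IntervalIntegrable f volume a b := by
  rw [intervalIntegrable_iff_integrableOn_Ioc_of_le hab]
  exact bdd_integrableOn measurableSet_Ioc measure_Ioc_lt_top hm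
    (fun x hx => hC x (Ioc_subset_Icc_self hx))

/-- The real Beta integral. -/
private lemma real_beta {a b : ℝ} (ha : 0 < a) (hb : 0 < b) :
    ∫ x in (0:ℝ)..1, x ^ (a - 1) * (1 - x) ^ (b - 1) =
      Real.Gamma a * Real.Gamma b / Real.Gamma (a + b) := by
  have h := Complex.Gamma_mul_Gamma_eq_betaIntegral (s := (a : ℂ)) (t := (b : ℂ))
    (by simpa using ha) (by simpa using hb)
  have hbeta : Complex.betaIntegral (a : ℂ) (b : ℂ) =
      ((∫ x in (0:ℝ)..1, x ^ (a - 1) * (1 - x) ^ (b - 1) : ℝ) : ℂ) := by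
    rw [Complex.betaIntegral, ← intervalIntegral.integral_ofReal]
    refine intervalIntegral.integral_congr (fun x hx => ?_)
    rw [Set.uIcc_of_le (by norm_num : (0:ℝ) ≤ 1)] at hx
    rw [Complex.ofReal_mul, Complex.ofReal_cpow hx.1, Complex.ofReal_cpow (by linarith [hx.2] : (0:ℝ) ≤ 1 - x)]
    push_cast
    ring
  rw [hbeta, ← Complex.ofReal_add, Complex.Gamma_ofReal, Complex.Gamma_ofReal,
    Complex.Gamma_ofReal, ← Complex.ofReal_mul, ← Complex.ofReal_mul] at h
  have h' := Complex.ofReal_inj.mp h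
  have hne : Real.Gamma (a + b) ≠ 0 := (Real.Gamma_pos_of_pos (by linarith)).ne'
  rw [eq_div_iff hne, mul_comm _ (Real.Gamma (a+b))]
  exact h'.symm

private lemma w_measurable (ν : ℝ) (m : ℕ) :
    Measurable (fun t : ℝ => t ^ (2*m) * (1 - t^2) ^ (ν - 1/2)) :=
  (measurable_id.pow_const (2*m)).mul
    ((measurable_const.sub (measurable_id.pow_const 2)).pow measurable_const)

private lemma w_bdd {ν : ℝ} (hν : 1/2 ≤ ν) (m : ℕ) :
    ∀ t ∈ Set.Icc (-1:ℝ) 1, |t ^ (2*m) * (1 - t^2) ^ (ν - 1/2)| ≤ 1 := by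
  intro t ht
  have ht2 : t^2 ≤ 1 := by nlinarith [ht.1, ht.2]
  have ht2' : (0:ℝ) ≤ 1 - t^2 := by linarith
  have h1 : |t ^ (2*m)| ≤ 1 := by
    rw [abs_pow]
    exact pow_le_one₀ (abs_nonneg t) (abs_le.mpr ⟨ht.1, ht.2⟩)
  have h2 : |(1 - t^2) ^ (ν - 1/2)| ≤ 1 := by
    rw [abs_of_nonneg (Real.rpow_nonneg ht2' _)]
    exact Real.rpow_le_one ht2' (by nlinarith [sq_nonneg t]) (by linarith)
  calc |t ^ (2*m) * (1 - t^2) ^ (ν - 1/2)| = |t ^ (2*m)| * |(1 - t^2) ^ (ν - 1/2)| := abs_mul _ _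
    _ ≤ 1 * 1 := mul_le_mul h1 h2 (abs_nonneg _) zero_le_one
    _ = 1 := mul_one 1

private lemma cm_eval {ν : ℝ} (hν : 1/2 ≤ ν) (m : ℕ) :
    ∫ t in (-1:ℝ)..1, t ^ (2*m) * (1 - t^2) ^ (ν - 1/2) =
      Real.Gamma (m + 1/2) * Real.Gamma (ν + 1/2) / Real.Gamma (ν + m + 1) := by
  set w : ℝ → ℝ := fun t => t ^ (2*m) * (1 - t^2) ^ (ν - 1/2) with hw
  have hI1 : IntervalIntegrable w volume (-1) 0 :=
    bdd_intervalIntegrable (by norm_num) (w_measurable ν m)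
      (fun x hx => w_bdd hν m x ⟨hx.1, by linarith [hx.2]⟩)
  have hI2 : IntervalIntegrable w volume 0 1 :=
    bdd_intervalIntegrable (by norm_num) (w_measurable ν m)
      (fun x hx => w_bdd hν m x ⟨by linarith [hx.1], hx.2⟩)
  have heven : ∫ t in (-1:ℝ)..0, w t = ∫ t in (0:ℝ)..1, w t := by
    have h := intervalIntegral.integral_comp_neg (a := 0) (b := 1) w
    have h2 : ∀ x : ℝ, w (-x) = w x := by
      intro x
      simp only [hw]
      rw [pow_mul, pow_mul, neg_sq]
    simp only [h2, neg_zero, neg_neg] at h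
    rw [← h]
  have hsplit : ∫ t in (-1:ℝ)..1, w t = 2 * ∫ t in (0:ℝ)..1, w t := by
    rw [← intervalIntegral.integral_add_adjacent_intervals hI1 hI2, heven]
    ring
  -- substitution t ↦ t^2
  set g : ℝ → ℝ := fun u => u ^ ((m:ℝ) + 1/2 - 1) * (1 - u) ^ (ν + 1/2 - 1) with hg
  have hsub : ∫ x in (0:ℝ)..1, (g ∘ (fun x : ℝ => x^2)) x * (2*x) = ∫ u in (0:ℝ)..1, g u := by
    have := intervalIntegral.integral_comp_mul_deriv''' (a := 0) (b := 1)
      (f := fun x : ℝ => x^2) (f' := fun x : ℝ => 2*x) (g := g)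
      (by fun_prop)
      (fun x hx => ((hasDerivAt_pow 2 x).congr_deriv (by ring)).hasDerivWithinAt)
      ?_ ?_ ?_
    · simpa using this
    · -- continuity of g on image of Ioo
      have himg : (fun x : ℝ => x^2) '' Set.Ioo (min 0 1) (max 0 1) ⊆ Set.Ioo 0 1 := by
        rintro u ⟨x, hx, rfl⟩
        rw [min_eq_left zero_le_one, max_eq_right zero_le_one] at hx
        show (x:ℝ)^2 ∈ Set.Ioo 0 1
        exact ⟨pow_pos hx.1 2, by nlinarith [hx.1, hx.2]⟩
      refine ContinuousOn.mono ?_ himg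
      intro u hu
      refine ContinuousWithinAt.mul ?_ ?_
      · exact ((Real.continuousAt_rpow_const u _ (Or.inl hu.1.ne')).continuousWithinAt)
      · exact (((Real.continuousAt_rpow_const (1-u) _ (Or.inl (by linarith [hu.2] : (1:ℝ)-u ≠ 0)))).comp
          (continuous_const.sub continuous_id).continuousAt).continuousWithinAt
    · -- integrability of g on image of Icc
      have himg : (fun x : ℝ => x^2) '' Set.uIcc (0:ℝ) 1 ⊆ Set.Icc 0 1 := by
        rintro u ⟨x, hx, rfl⟩
        rw [Set.uIcc_of_le zero_le_one] at hx
        show (x:ℝ)^2 ∈ Set.Icc 0 1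
        exact ⟨sq_nonneg x, by nlinarith [hx.1, hx.2]⟩
      refine IntegrableOn.mono_set ?_ himg
      have hmeas : Measurable g :=
        (measurable_id.pow measurable_const).mul
          ((measurable_const.sub measurable_id).pow measurable_const)
      have hbound : IntegrableOn (fun u : ℝ => u ^ ((m:ℝ) + 1/2 - 1)) (Set.Icc (0:ℝ) 1) := by
        rw [integrableOn_Icc_iff_integrableOn_Ioc]
        rw [← intervalIntegrable_iff_integrableOn_Ioc_of_le zero_le_one]
        exact intervalIntegral.intervalIntegrable_rpow' (by push_cast; linarith [Nat.cast_nonneg (α := ℝ) m])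
      refine Integrable.mono' hbound hmeas.aestronglyMeasurable.restrict ?_
      rw [ae_restrict_iff' measurableSet_Icc]
      refine Filter.Eventually.of_forall fun u hu => ?_
      have h1 : (0:ℝ) ≤ 1 - u := by linarith [hu.2]
      rw [Real.norm_eq_abs, abs_of_nonneg (mul_nonneg (Real.rpow_nonneg hu.1 _) (Real.rpow_nonneg h1 _))]
      calc u ^ ((m:ℝ) + 1/2 - 1) * (1-u) ^ (ν + 1/2 - 1)
          ≤ u ^ ((m:ℝ) + 1/2 - 1) * 1 := by
            refine mul_le_mul_of_nonneg_left ?_ (Real.rpow_nonneg hu.1 _)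
            exact Real.rpow_le_one h1 (by linarith [hu.1]) (by linarith)
        _ = u ^ ((m:ℝ) + 1/2 - 1) := mul_one _
    · -- integrability of (g ∘ f) * f'
      rw [Set.uIcc_of_le zero_le_one]
      refine bdd_integrableOn measurableSet_Icc measure_Icc_lt_top ?_ (C := 2) ?_
      · exact ((((measurable_id.pow_const 2).pow measurable_const).mul
          ((measurable_const.sub (measurable_id.pow_const 2)).pow measurable_const)).mul
          (measurable_const.mul measurable_id))
      · intro x hx
        rcases eq_or_lt_of_le hx.1 with h0 | h0
        · rw [← h0]
          norm_num
        · have hx2 : x^2 ≤ 1 := by nlinarith [hx.2]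
          have hxp : ((x^2:ℝ)) ^ ((m:ℝ) + 1/2 - 1) = x ^ (2*(m:ℝ) - 1) := by
            rw [← Real.rpow_natCast x 2, ← Real.rpow_mul h0.le,
              show ((2:ℕ):ℝ) * ((m:ℝ) + 1/2 - 1) = 2*(m:ℝ) - 1 by push_cast; ring]
          have hval : (g ∘ (fun x : ℝ => x^2)) x * (2*x)
              = 2 * x ^ (2*(m:ℝ)) * (1 - x^2) ^ (ν + 1/2 - 1) := by
            simp only [Function.comp, hg]
            rw [hxp, Real.rpow_sub h0, Real.rpow_one,
              show (2:ℝ)*(m:ℝ) = (2*m:ℕ) by push_cast; ring, Real.rpow_natCast]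
            field_simp
          rw [hval, abs_mul, abs_mul]
          have e1 : |(2:ℝ)| = 2 := by norm_num
          have e2 : |x ^ (2*(m:ℝ))| ≤ 1 := by
            rw [show (2:ℝ)*(m:ℝ) = (2*m:ℕ) by push_cast; ring, Real.rpow_natCast, abs_pow]
            exact pow_le_one₀ (abs_nonneg x) (abs_le.mpr ⟨by linarith [h0], hx.2⟩)
          have e3 : |(1 - x^2) ^ (ν + 1/2 - 1)| ≤ 1 := by
            rw [abs_of_nonneg (Real.rpow_nonneg (by linarith) _)]
            exact Real.rpow_le_one (by linarith) (by nlinarith) (by linarith)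
          calc |(2:ℝ)| * |x ^ (2*(m:ℝ))| * |(1 - x^2) ^ (ν + 1/2 - 1)|
              ≤ 2 * 1 * 1 := by
                refine mul_le_mul (mul_le_mul (le_of_eq e1) e2 (abs_nonneg _) (by norm_num)) e3 (abs_nonneg _) (by norm_num)
            _ = 2 := by norm_num
  -- identify LHS of hsub with 2 * ∫ w
  have hid : ∫ x in (0:ℝ)..1, (g ∘ (fun x : ℝ => x^2)) x * (2*x) = 2 * ∫ t in (0:ℝ)..1, w t := by
    rw [← intervalIntegral.integral_const_mul]
    refine intervalIntegral.integral_congr_ae ?_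
    refine Filter.Eventually.of_forall fun x hx => ?_
    rw [Set.uIoc_of_le zero_le_one] at hx
    have h0 : 0 < x := hx.1
    simp only [Function.comp, hg, hw]
    have h1 : (x^2 : ℝ) ^ ((m:ℝ) + 1/2 - 1) * x = x ^ (2*m : ℕ) := by
      rw [← Real.rpow_natCast x 2, ← Real.rpow_mul h0.le,
        show ((2:ℕ):ℝ) * ((m:ℝ) + 1/2 - 1) = ((2*m : ℕ) : ℝ) - 1 by push_cast; ring,
        Real.rpow_sub h0, Real.rpow_one, Real.rpow_natCast, div_mul_cancel₀]
      exact h0.ne'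
    calc (x^2 : ℝ) ^ ((m:ℝ) + 1/2 - 1) * (1 - x^2) ^ (ν + 1/2 - 1) * (2*x)
        = 2 * ((x^2 : ℝ) ^ ((m:ℝ) + 1/2 - 1) * x * (1 - x^2) ^ (ν + 1/2 - 1)) := by ring
      _ = 2 * (x ^ (2*m) * (1 - x^2) ^ (ν - 1/2)) := by
          rw [h1, show ν + 1/2 - 1 = ν - 1/2 by ring]
  have hbeta := real_beta (a := (m:ℝ) + 1/2) (b := ν + 1/2)
    (by positivity) (by linarith)
  rw [hsplit, ← hid, hsub, hg]
  rw [hbeta]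
  rw [show (m:ℝ) + 1/2 + (ν + 1/2) = ν + m + 1 by ring]

private lemma core_ineq {ν : ℝ} (hν : 1/2 ≤ ν) {k : ℝ} (hk : 0 < k) :
    Real.Gamma (ν + 1) *
      ∑' m : ℕ, (-1 : ℝ) ^ m / (m.factorial * Real.Gamma (ν + m + 1)) * (k / 2) ^ (2 * m) ≤ 1 := by
  set S : Set ℝ := Set.Ioc (-1) 1 with hS
  set F : ℕ → ℝ → ℝ := fun m t =>
    ((-1:ℝ)^m * k^(2*m) / (2*m).factorial) * (t^(2*m) * (1-t^2)^(ν-1/2)) with hF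
  have hwint : ∀ m : ℕ, IntegrableOn (fun t : ℝ => t^(2*m) * (1-t^2)^(ν-1/2)) S volume :=
    fun m => bdd_integrableOn measurableSet_Ioc measure_Ioc_lt_top (w_measurable ν m)
      (fun x hx => w_bdd hν m x (Set.Ioc_subset_Icc_self hx))
  have hFint : ∀ m : ℕ, Integrable (F m) (volume.restrict S) :=
    fun m => (hwint m).const_mul _
  have hSvol : (volume S).toReal = 2 := by
    rw [hS, Real.volume_Ioc]
    rw [ENNReal.toReal_ofReal (by norm_num)]
    norm_num
  have hnorm : ∀ m : ℕ, (∫ t, ‖F m t‖ ∂(volume.restrict S)) ≤ k^(2*m) / (2*m).factorial * 2 := by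
    intro m
    have hb : ∀ t ∈ S, ‖F m t‖ ≤ k^(2*m) / (2*m).factorial := by
      intro t ht
      rw [Real.norm_eq_abs, abs_mul]
      have h1 : |(-1:ℝ)^m * k^(2*m) / (2*m).factorial| = k^(2*m) / (2*m).factorial := by
        rw [abs_div, abs_mul, abs_pow, abs_neg, abs_one, one_pow, one_mul, abs_pow,
          abs_of_pos hk, Nat.abs_cast]
      rw [h1]
      calc k^(2*m) / (2*m).factorial * |t^(2*m) * (1-t^2)^(ν-1/2)|
          ≤ k^(2*m) / (2*m).factorial * 1 := by
            refine mul_le_mul_of_nonneg_left ?_ (by positivity)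
            exact w_bdd hν m t (Set.Ioc_subset_Icc_self ht)
        _ = k^(2*m) / (2*m).factorial := mul_one _
    calc (∫ t, ‖F m t‖ ∂(volume.restrict S))
        ≤ ∫ _ in S, (k^(2*m) / (2*m).factorial) ∂volume := by
          refine setIntegral_mono_on (hFint m).norm (integrableOn_const measure_Ioc_lt_top.ne)
            measurableSet_Ioc hb
      _ = k^(2*m) / (2*m).factorial * 2 := by
          rw [setIntegral_const, smul_eq_mul, Measure.real, hSvol]
          ring
  have hsummand : Summable (fun m : ℕ => k^(2*m) / (2*m).factorial * 2) := by
    have h0 : Summable (fun n : ℕ => k^n / n.factorial) := Real.summable_pow_div_factorial k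
    have hinj : Function.Injective (fun m : ℕ => 2*m) := fun a b h => by simp only at h; omega
    have h1 := h0.comp_injective hinj
    exact (h1.mul_right 2)
  have hsummable : Summable (fun m : ℕ => ∫ t, ‖F m t‖ ∂(volume.restrict S)) :=
    Summable.of_nonneg_of_le (fun m => integral_nonneg (fun t => norm_nonneg _)) hnorm hsummand
  have hswap := MeasureTheory.integral_tsum_of_summable_integral_norm hFint hsummable
  -- pointwise sum
  have hpt : ∀ t : ℝ, ∑' m : ℕ, F m t = Real.cos (k*t) * (1-t^2)^(ν-1/2) := by
    intro t
    calc ∑' m : ℕ, F m t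
        = ∑' m : ℕ, ((-1:ℝ)^m * (k*t)^(2*m) / (2*m).factorial) * (1-t^2)^(ν-1/2) := by
          refine tsum_congr fun m => ?_
          simp only [hF]
          rw [mul_pow]
          ring
      _ = (∑' m : ℕ, (-1:ℝ)^m * (k*t)^(2*m) / (2*m).factorial) * (1-t^2)^(ν-1/2) :=
          tsum_mul_right
      _ = Real.cos (k*t) * (1-t^2)^(ν-1/2) := by rw [← Real.cos_eq_tsum]
  have hcm : ∀ m : ℕ, (∫ t in S, t^(2*m) * (1-t^2)^(ν-1/2)) =
      Real.Gamma (m + 1/2) * Real.Gamma (ν + 1/2) / Real.Gamma (ν + m + 1) := by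
    intro m
    rw [hS, ← intervalIntegral.integral_of_le (by norm_num : (-1:ℝ) ≤ 1)]
    exact cm_eval hν m
  -- duplication-based term identity
  have hterm : ∀ m : ℕ,
      ((-1:ℝ)^m * k^(2*m) / (2*m).factorial) *
        (Real.Gamma (m + 1/2) * Real.Gamma (ν + 1/2) / Real.Gamma (ν + m + 1))
      = (Real.sqrt π * Real.Gamma (ν + 1/2)) *
        ((-1:ℝ)^m / (m.factorial * Real.Gamma (ν + m + 1)) * (k/2)^(2*m)) := by
    intro m
    have hdup := Real.Gamma_mul_Gamma_add_half ((m:ℝ) + 1/2)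
    rw [show (m:ℝ) + 1/2 + 1/2 = (m:ℝ) + 1 by ring, Real.Gamma_nat_eq_factorial,
      show 2*((m:ℝ) + 1/2) = ((2*m:ℕ):ℝ) + 1 by push_cast; ring, Real.Gamma_nat_eq_factorial,
      show (1:ℝ) - (((2*m:ℕ):ℝ) + 1) = -((2*m:ℕ):ℝ) by ring,
      Real.rpow_neg (by norm_num : (0:ℝ) ≤ 2), Real.rpow_natCast] at hdup
    have hmf : (0:ℝ) < m.factorial := by exact_mod_cast m.factorial_pos
    have h2mf : (0:ℝ) < (2*m).factorial := by exact_mod_cast (2*m).factorial_pos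
    have h2p : (0:ℝ) < 2^(2*m) := by positivity
    have hdup' : Real.Gamma ((m:ℝ) + 1/2) * m.factorial * 2^(2*m) = (2*m).factorial * Real.sqrt π := by
      rw [hdup]
      field_simp
    have hΓm : Real.Gamma ((m:ℝ) + 1/2) = (2*m).factorial * Real.sqrt π / (2^(2*m) * m.factorial) := by
      rw [eq_div_iff (by positivity)]
      linear_combination hdup'
    rw [hΓm, div_pow k 2 (2*m)]
    have hΓν : Real.Gamma (ν + m + 1) ≠ 0 :=
      (Real.Gamma_pos_of_pos (by positivity)).ne'
    field_simp
  -- assemble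
  set Sb : ℝ := ∑' m : ℕ, (-1 : ℝ) ^ m / (m.factorial * Real.Gamma (ν + m + 1)) * (k / 2) ^ (2 * m) with hSbdef
  have hsum_eq : (∑' m : ℕ, ∫ t, F m t ∂(volume.restrict S))
      = Real.sqrt π * Real.Gamma (ν + 1/2) * Sb := by
    rw [hSbdef, ← tsum_mul_left]
    refine tsum_congr fun m => ?_
    rw [show (∫ t, F m t ∂(volume.restrict S)) =
        ((-1:ℝ)^m * k^(2*m) / (2*m).factorial) * ∫ t in S, t^(2*m) * (1-t^2)^(ν-1/2) from
      MeasureTheory.integral_const_mul _ _, hcm m, hterm m]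
  have hw0int : IntegrableOn (fun t : ℝ => (1-t^2)^(ν-1/2)) S volume := by
    have := hwint 0
    simpa using this
  have hcosint : IntegrableOn (fun t : ℝ => Real.cos (k*t) * (1-t^2)^(ν-1/2)) S volume := by
    refine bdd_integrableOn measurableSet_Ioc measure_Ioc_lt_top ?_ (C := 1) ?_
    · exact (Real.measurable_cos.comp (measurable_const.mul measurable_id)).mul
        ((measurable_const.sub (measurable_id.pow_const 2)).pow measurable_const)
    · intro x hx
      have := w_bdd hν 0 x (Set.Ioc_subset_Icc_self hx)
      norm_num at this
      calc |Real.cos (k*x) * (1-x^2)^(ν-1/2)| = |Real.cos (k*x)| * |(1-x^2)^(ν-1/2)| := abs_mul _ _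
        _ ≤ 1 * 1 := mul_le_mul (Real.abs_cos_le_one _) this (abs_nonneg _) zero_le_one
        _ = 1 := by norm_num
  have hmono : (∫ t in S, Real.cos (k*t) * (1-t^2)^(ν-1/2)) ≤ ∫ t in S, (1-t^2)^(ν-1/2) := by
    refine setIntegral_mono_on hcosint hw0int measurableSet_Ioc ?_
    intro t ht
    have ht2 : (0:ℝ) ≤ 1 - t^2 := by
      rcases Set.Ioc_subset_Icc_self ht with ⟨h1, h2⟩
      nlinarith
    exact mul_le_of_le_one_left (Real.rpow_nonneg ht2 _) (Real.cos_le_one _)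
  have hc0 : (∫ t in S, (1-t^2)^(ν-1/2)) = Real.sqrt π * Real.Gamma (ν + 1/2) / Real.Gamma (ν + 1) := by
    have h0 := hcm 0
    simp only [mul_zero, pow_zero, one_mul, Nat.cast_zero, zero_add, add_zero] at h0
    rw [h0, Real.Gamma_one_half_eq]
  have hlhs : (∫ t, (∑' m : ℕ, F m t) ∂(volume.restrict S))
      = ∫ t in S, Real.cos (k*t) * (1-t^2)^(ν-1/2) := by
    refine MeasureTheory.integral_congr_ae (Filter.Eventually.of_forall fun t => hpt t)
  have key : Real.sqrt π * Real.Gamma (ν + 1/2) * Sb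
      ≤ Real.sqrt π * Real.Gamma (ν + 1/2) / Real.Gamma (ν + 1) := by
    calc Real.sqrt π * Real.Gamma (ν + 1/2) * Sb = ∑' m : ℕ, ∫ t, F m t ∂(volume.restrict S) := hsum_eq.symm
      _ = ∫ t, (∑' m : ℕ, F m t) ∂(volume.restrict S) := hswap
      _ = ∫ t in S, Real.cos (k*t) * (1-t^2)^(ν-1/2) := hlhs
      _ ≤ ∫ t in S, (1-t^2)^(ν-1/2) := hmono
      _ = Real.sqrt π * Real.Gamma (ν + 1/2) / Real.Gamma (ν + 1) := hc0
  have hpos : 0 < Real.sqrt π * Real.Gamma (ν + 1/2) :=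
    mul_pos (Real.sqrt_pos.mpr Real.pi_pos) (Real.Gamma_pos_of_pos (by linarith))
  have hΓν1 : 0 < Real.Gamma (ν + 1) := Real.Gamma_pos_of_pos (by linarith)
  have hSble : Sb ≤ 1 / Real.Gamma (ν + 1) := by
    have h2 : Real.sqrt π * Real.Gamma (ν + 1/2) / Real.Gamma (ν + 1)
        = Real.sqrt π * Real.Gamma (ν + 1/2) * (1 / Real.Gamma (ν + 1)) := by ring
    rw [h2] at key
    exact le_of_mul_le_mul_left key hpos
  calc Real.Gamma (ν + 1) * Sb ≤ Real.Gamma (ν + 1) * (1 / Real.Gamma (ν + 1)) :=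
        mul_le_mul_of_nonneg_left hSble hΓν1.le
    _ = 1 := by field_simp


/-- The Bessel function of the first kind of order `ν`, defined for `x > 0` by its
power series `J_ν(x) = (x/2)^ν ∑_{m≥0} (-1)^m / (m! Γ(ν+m+1)) (x/2)^{2m}`. -/
noncomputable def besselJ (ν x : ℝ) : ℝ :=
  (x / 2) ^ ν *
    ∑' m : ℕ, (-1 : ℝ) ^ m / (m.factorial * Real.Gamma (ν + m + 1)) * (x / 2) ^ (2 * m)

/-- For the step-function pair correlation `g₂(r) = Θ(r-1)`, the structure factor
`S(k) = 1 - φ 2^{3ν} Γ(1+ν) J_ν(k)/k^ν` (with `ν = d/2`) is nonnegative for all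
`k > 0` whenever `0 ≤ φ ≤ 1/2^d`, since `2^ν Γ(1+ν) J_ν(k)/k^ν ≤ 1` for all `k > 0`. -/
theorem step_function_structure_factor_nonneg (d : ℕ) (hd : 1 ≤ d)
    (ν : ℝ) (hν : ν = d / 2) :
    (∀ k : ℝ, 0 < k →
        (2 : ℝ) ^ ν * Real.Gamma (1 + ν) * besselJ ν k / k ^ ν ≤ 1) ∧
      ∀ φ : ℝ, 0 ≤ φ → φ ≤ 1 / 2 ^ d → ∀ k : ℝ, 0 < k →
        0 ≤ 1 - φ * (2 : ℝ) ^ (3 * ν) * Real.Gamma (1 + ν) * besselJ ν k / k ^ ν := by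
  have hν' : (1:ℝ)/2 ≤ ν := by
    rw [hν]
    have : (1:ℝ) ≤ (d:ℝ) := by exact_mod_cast hd
    linarith
  have h1 : ∀ k : ℝ, 0 < k → (2:ℝ)^ν * Real.Gamma (1+ν) * besselJ ν k / k^ν ≤ 1 := by
    intro k hk
    have hcore := core_ineq hν' hk
    have hkν : (0:ℝ) < k ^ ν := Real.rpow_pos_of_pos hk ν
    have h2ν : (0:ℝ) < (2:ℝ) ^ ν := Real.rpow_pos_of_pos two_pos ν
    have hkd : ((k/2 : ℝ)) ^ ν = k ^ ν / 2 ^ ν := Real.div_rpow hk.le (by norm_num) ν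
    rw [besselJ, hkd, add_comm 1 ν]
    set Sb : ℝ := ∑' m : ℕ, (-1 : ℝ) ^ m / (m.factorial * Real.Gamma (ν + m + 1)) * (k / 2) ^ (2 * m) with hSbdef
    have heq : (2:ℝ)^ν * Real.Gamma (ν+1) * (k^ν / 2^ν * Sb) / k^ν = Real.Gamma (ν+1) * Sb := by
      field_simp
    rw [heq]
    exact hcore
  refine ⟨h1, ?_⟩
  intro φ hφ0 hφ k hk
  have hB := h1 k hk
  have hA0 : 0 ≤ φ * (2:ℝ)^((2:ℝ)*ν) := by positivity
  have h2d : (2:ℝ)^((2:ℝ)*ν) = (2:ℝ)^(d:ℕ) := by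
    rw [hν, show (2:ℝ)*((d:ℝ)/2) = ((d:ℕ):ℝ) by push_cast; ring, Real.rpow_natCast]
  have hA1 : φ * (2:ℝ)^((2:ℝ)*ν) ≤ 1 := by
    rw [h2d]
    calc φ * (2:ℝ)^(d:ℕ) ≤ (1/2^(d:ℕ)) * 2^(d:ℕ) :=
          mul_le_mul_of_nonneg_right hφ (by positivity)
      _ = 1 := by field_simp
  have hrw : φ * (2:ℝ)^(3*ν) * Real.Gamma (1+ν) * besselJ ν k / k^ν
      = (φ * (2:ℝ)^((2:ℝ)*ν)) * ((2:ℝ)^ν * Real.Gamma (1+ν) * besselJ ν k / k^ν) := by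
    rw [show (3:ℝ)*ν = (2:ℝ)*ν + ν by ring, Real.rpow_add two_pos]
    ring
  rw [hrw, sub_nonneg]
  rcases le_or_gt ((2:ℝ)^ν * Real.Gamma (1+ν) * besselJ ν k / k^ν) 0 with hB0 | hB0
  · have := mul_nonpos_iff.mpr (Or.inl ⟨hA0, hB0⟩)
    linarith
  · exact mul_le_one₀ hA1 hB0.le hB
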